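/- (Spectrum of the next-generation matrix of the transmission model; key step of Theorem 3.) Let n ≥ 1 and μ_H, γ_H > 0. Let a, b ∈ ℝ^{2n}, let P be any 2n×2n real matrix, and let N be any 2×4 real matrix. Let e₁ = (1,0) ∈ ℝ², V_H = [[μ_H+γ_H, 0], [−γ_H, μ_H]], F_VH = e₁ aᵀ (the 2×2n matrix whose first row is aᵀ and whose second row is zero), and F_HV = b e₁ᵀ (the 2n×2 matrix whose first column is b and whose second column is zero). Let K be the (2n+6)×(2n+6) block matrix on the index set (2) ⊕ (2n) ⊕ (4) with block rows [0, F_VH·P, N], [F_HV·V_H⁻¹, 0, 0], [0, 0, 0]. Then the characteristic polynomial of K equals X^{2n+4} · (X² − c), where c = (aᵀ P b)/(μ_H+γ_H); in particular, if c ≥ 0 the eigenvalues of K are 0 and ±√c, and its spectral radius is √c. -/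

import Mathlib

open Matrix Polynomial

/-- The host transition matrix `V_H = [[μ_H+γ_H, 0], [−γ_H, μ_H]]`. -/
def VH (μH γH : ℝ) : Matrix (Fin 2) (Fin 2) ℝ := !![μH + γH, 0; -γH, μH]

/-- The next-generation matrix `K` of the transmission model, with block rows
`[0, F_VH·P, N]`, `[F_HV·V_H⁻¹, 0, 0]`, `[0, 0, 0]`, where `F_VH = e₁ aᵀ` and
`F_HV = b e₁ᵀ`. -/
noncomputable def Kmat (n : ℕ) (μH γH : ℝ) (a b : Fin (2 * n) → ℝ)
    (P : Matrix (Fin (2 * n)) (Fin (2 * n)) ℝ) (N : Matrix (Fin 2) (Fin 4) ℝ) :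
    Matrix (Fin 2 ⊕ (Fin (2 * n) ⊕ Fin 4)) (Fin 2 ⊕ (Fin (2 * n) ⊕ Fin 4)) ℝ :=
  Matrix.fromBlocks 0
    (Matrix.fromCols (Matrix.vecMulVec ![1, 0] a * P) N)
    (Matrix.fromRows (Matrix.vecMulVec b ![1, 0] * (VH μH γH)⁻¹) 0)
    0

lemma charpoly_eval_aux {m : Type*} [Fintype m] [DecidableEq m]
    (M : Matrix m m ℝ) (x : ℝ) :
    M.charpoly.eval x = (Matrix.diagonal (fun _ => x) - M).det := by
  rw [Matrix.charpoly, ← Polynomial.coe_evalRingHom, RingHom.map_det]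
  congr 1
  ext i j
  by_cases h : i = j <;>
    simp [Matrix.charmatrix_apply, Matrix.diagonal_apply, h, Matrix.sub_apply]

lemma VH_inv (μH γH : ℝ) (hμH : 0 < μH) (hγH : 0 < γH) :
    (VH μH γH)⁻¹ = !![(μH + γH)⁻¹, 0; γH * ((μH + γH) * μH)⁻¹, μH⁻¹] := by
  apply Matrix.inv_eq_right_inv
  have h1 : μH + γH ≠ 0 := by positivity
  have h2 : μH ≠ 0 := ne_of_gt hμH
  ext i j
  fin_cases i <;> fin_cases j <;>
    simp [VH, Matrix.mul_apply, Fin.sum_univ_two] <;>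
    · field_simp
      try ring

/-- **Spectrum of the next-generation matrix of the transmission model.**
The characteristic polynomial of `K` equals `X^(2n+4)·(X² − c)` with
`c = (aᵀ P b)/(μ_H+γ_H)`; in particular, if `c ≥ 0` the eigenvalues of `K` are
`0` and `±√c`, and its spectral radius is `√c`. -/
theorem ngm_transmission_charpoly_and_spectrum
    (n : ℕ) (hn : 1 ≤ n) (μH γH : ℝ) (hμH : 0 < μH) (hγH : 0 < γH)
    (a b : Fin (2 * n) → ℝ)
    (P : Matrix (Fin (2 * n)) (Fin (2 * n)) ℝ) (N : Matrix (Fin 2) (Fin 4) ℝ) :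
    (Kmat n μH γH a b P N).charpoly =
      Polynomial.X ^ (2 * n + 4) *
        (Polynomial.X ^ 2 - Polynomial.C (a ⬝ᵥ (P *ᵥ b) / (μH + γH))) ∧
    (0 ≤ a ⬝ᵥ (P *ᵥ b) / (μH + γH) →
      spectrum ℝ (Kmat n μH γH a b P N) =
        {0, Real.sqrt (a ⬝ᵥ (P *ᵥ b) / (μH + γH)),
          -Real.sqrt (a ⬝ᵥ (P *ᵥ b) / (μH + γH))}) ∧
    (0 ≤ a ⬝ᵥ (P *ᵥ b) / (μH + γH) →
      spectralRadius ℝ (Kmat n μH γH a b P N) =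
        ENNReal.ofReal (Real.sqrt (a ⬝ᵥ (P *ᵥ b) / (μH + γH)))) := by
  have hsum : μH + γH ≠ 0 := by positivity
  set c : ℝ := a ⬝ᵥ (P *ᵥ b) / (μH + γH) with hc_def
  -- the 2×2 product of the off-diagonal blocks
  have hBC : (Matrix.vecMulVec ![1, 0] a * P) *
      (Matrix.vecMulVec b ![1, 0] * (VH μH γH)⁻¹) = !![c, 0; 0, 0] := by
    ext i j
    rw [Matrix.mul_apply]
    simp only [Matrix.mul_apply, Matrix.vecMulVec_apply, VH_inv μH γH hμH hγH]
    fin_cases i <;> fin_cases j <;>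
      simp [Fin.sum_univ_two, dotProduct, Matrix.mulVec, hc_def,
        Finset.sum_mul, Finset.mul_sum, div_eq_mul_inv] <;>
      · rw [Finset.sum_comm]
        refine Finset.sum_congr rfl fun k _ => ?_
        refine Finset.sum_congr rfl fun m _ => ?_
        ring
  -- evaluation of the characteristic polynomial at any nonzero x
  have key : ∀ x : ℝ, x ≠ 0 →
      ((Kmat n μH γH a b P N).charpoly).eval x =
        (Polynomial.X ^ (2 * n + 4) *
          (Polynomial.X ^ 2 - Polynomial.C c)).eval x := by
    intro x hx
    rw [charpoly_eval_aux]
    have hdiag : (Matrix.diagonal (fun _ => x) :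
        Matrix (Fin 2 ⊕ (Fin (2 * n) ⊕ Fin 4)) (Fin 2 ⊕ (Fin (2 * n) ⊕ Fin 4)) ℝ) =
        Matrix.fromBlocks (Matrix.diagonal fun _ => x) 0 0 (Matrix.diagonal fun _ => x) := by
      rw [Matrix.fromBlocks_diagonal]
      congr 1
      ext i; cases i <;> rfl
    rw [hdiag, Kmat]
    rw [show (Matrix.fromBlocks (Matrix.diagonal fun _ => x) 0 0 (Matrix.diagonal fun _ => x) -
        Matrix.fromBlocks 0
          (Matrix.fromCols (Matrix.vecMulVec ![1, 0] a * P) N)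
          (Matrix.fromRows (Matrix.vecMulVec b ![1, 0] * (VH μH γH)⁻¹) 0) 0) =
        Matrix.fromBlocks (Matrix.diagonal fun _ => x)
          (-(Matrix.fromCols (Matrix.vecMulVec ![1, 0] a * P) N))
          (-(Matrix.fromRows (Matrix.vecMulVec b ![1, 0] * (VH μH γH)⁻¹) 0))
          (Matrix.diagonal fun _ => x) from by
      rw [sub_eq_add_neg, Matrix.fromBlocks_neg, Matrix.fromBlocks_add]
      simp]
    haveI : Invertible (Matrix.diagonal (fun _ => x) :
        Matrix (Fin (2 * n) ⊕ Fin 4) (Fin (2 * n) ⊕ Fin 4) ℝ) :=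
      invertibleOfLeftInverse _ (Matrix.diagonal fun _ => x⁻¹) (by
        rw [Matrix.diagonal_mul_diagonal]
        simp [inv_mul_cancel₀ hx])
    rw [Matrix.det_fromBlocks₂₂]
    have hinvOf : ⅟(Matrix.diagonal (fun _ => x) :
        Matrix (Fin (2 * n) ⊕ Fin 4) (Fin (2 * n) ⊕ Fin 4) ℝ) =
        Matrix.diagonal fun _ => x⁻¹ :=
      invOf_eq_left_inv (by rw [Matrix.diagonal_mul_diagonal]; simp [inv_mul_cancel₀ hx])
    rw [hinvOf]
    have hdetD : (Matrix.diagonal (fun _ => x) :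
        Matrix (Fin (2 * n) ⊕ Fin 4) (Fin (2 * n) ⊕ Fin 4) ℝ).det = x ^ (2 * n + 4) := by
      rw [Matrix.det_diagonal, Finset.prod_const]
      congr 1
      simp [Fintype.card_sum]
    have hmid : @HMul.hMul _ _ _ Matrix.instHMulOfFintypeOfMulOfAddCommMonoid
        ((-(Matrix.fromCols (Matrix.vecMulVec ![1, 0] a * P) N)) *
        (Matrix.diagonal (fun _ => x⁻¹) :
          Matrix (Fin (2 * n) ⊕ Fin 4) (Fin (2 * n) ⊕ Fin 4) ℝ))
        (-(Matrix.fromRows (Matrix.vecMulVec b ![1, 0] * (VH μH γH)⁻¹) 0)) =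
        x⁻¹ • !![c, 0; 0, 0] := by
      rw [← Matrix.smul_one_eq_diagonal]
      simp only [Matrix.neg_mul, Matrix.mul_neg, neg_neg, Matrix.mul_smul,
        Matrix.mul_one, Matrix.smul_mul, Matrix.fromCols_mul_fromRows,
        hBC, Matrix.mul_zero, add_zero, smul_neg]
    rw [hmid, hdetD]
    have hdet2 : ((Matrix.diagonal (fun _ => x) : Matrix (Fin 2) (Fin 2) ℝ) -
        x⁻¹ • !![c, 0; 0, 0]).det = x ^ 2 - c := by
      rw [Matrix.det_fin_two]
      simp [Matrix.diagonal_apply]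
      field_simp
    rw [hdet2]
    simp
  -- the characteristic polynomial identity
  have hchar : (Kmat n μH γH a b P N).charpoly =
      Polynomial.X ^ (2 * n + 4) * (Polynomial.X ^ 2 - Polynomial.C c) := by
    apply Polynomial.eq_of_infinite_eval_eq
    apply Set.Infinite.mono (s := ({0} : Set ℝ)ᶜ)
    · intro x hx
      exact key x hx
    · exact (Set.finite_singleton 0).infinite_compl
  -- membership in the spectrum
  have halg : ∀ x : ℝ, (algebraMap ℝ (Matrix (Fin 2 ⊕ (Fin (2 * n) ⊕ Fin 4))
      (Fin 2 ⊕ (Fin (2 * n) ⊕ Fin 4)) ℝ)) x = Matrix.diagonal fun _ => x := by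
    intro x
    ext i j
    simp [Matrix.algebraMap_matrix_apply, Matrix.diagonal_apply]
  have hmem : ∀ x : ℝ, x ∈ spectrum ℝ (Kmat n μH γH a b P N) ↔
      x ^ (2 * n + 4) * (x ^ 2 - c) = 0 := by
    intro x
    rw [spectrum.mem_iff, Matrix.isUnit_iff_isUnit_det, isUnit_iff_ne_zero, not_not,
      halg x]
    rw [← charpoly_eval_aux, hchar]
    simp
  have hspec : 0 ≤ c → spectrum ℝ (Kmat n μH γH a b P N) =
      {0, Real.sqrt c, -Real.sqrt c} := by
    intro hc0
    ext x
    rw [hmem x]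
    have hfac : x ^ 2 - c = (x - Real.sqrt c) * (x + Real.sqrt c) := by
      linear_combination Real.sq_sqrt hc0
    rw [hfac, mul_eq_zero, mul_eq_zero, pow_eq_zero_iff (by omega : 2 * n + 4 ≠ 0),
      sub_eq_zero, add_eq_zero_iff_eq_neg]
    simp [Set.mem_insert_iff]
  refine ⟨hchar, hspec, ?_⟩
  intro hc0
  rw [spectralRadius, hspec hc0]
  have : (⨆ k ∈ ({0, Real.sqrt c, -Real.sqrt c} : Set ℝ), (‖k‖₊ : ENNReal)) =
      (‖Real.sqrt c‖₊ : ENNReal) := by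
    rw [iSup_insert, iSup_insert, iSup_singleton]
    simp [nnnorm_neg]
  rw [this]
  exact Real.enorm_eq_ofReal (Real.sqrt_nonneg c)
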